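/- Every invertible 2×2 matrix g over the finite field F_q satisfies g^{q(q²−1)} = 1. -/
import Mathlib

open Polynomial

lemma dvd_key (F : Type*) [Field F] [Fintype F] (q : ℕ) (hq : Fintype.card F = q)
    (f : F[X]) (hm : f.Monic) (hd : f.natDegree = 2) :
    f ∣ (X ^ q ^ 2 - X) ^ 2 := by
  by_cases hirr : Irreducible f
  · -- adjoin a root; the resulting field has q^2 elements
    haveI := Fact.mk hirr
    let L := AdjoinRoot f
    letI : Fintype L := Module.fintypeOfFintype (AdjoinRoot.powerBasis hm.ne_zero).basis
    have hcard : Fintype.card L = q ^ 2 := by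
      rw [Module.card_fintype (AdjoinRoot.powerBasis hm.ne_zero).basis, hq]
      simp [hd]
    have hroot : (aeval (AdjoinRoot.root f)) (X ^ q ^ 2 - X : F[X]) = 0 := by
      have := FiniteField.pow_card (AdjoinRoot.root f)
      rw [hcard] at this
      simp [this]
    have hdvd1 : f ∣ (X ^ q ^ 2 - X : F[X]) := by
      have hmin := AdjoinRoot.minpoly_root (K := F) hm.ne_zero
      rw [hm.leadingCoeff, inv_one, map_one, mul_one] at hmin
      exact hmin ▸ minpoly.dvd F _ hroot
    exact hdvd1.trans (dvd_pow_self _ two_ne_zero)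
  · obtain ⟨c₁, c₂, h0, h1⟩ := (hm.not_irreducible_iff_exists_add_mul_eq_coeff hd).mp hirr
    have hf : f = (X + C c₁) * (X + C c₂) := by
      rw [f.as_sum_range_C_mul_X_pow, hd, Finset.sum_range_succ, Finset.sum_range_succ,
        Finset.sum_range_one, ← hd, hm.coeff_natDegree, hd, h0, h1, C_mul, C_add, C_1]
      ring
    have key : ∀ c : F, (X + C c) ∣ (X ^ q ^ 2 - X : F[X]) := by
      intro c
      have : (X - C (-c)) ∣ (X ^ q ^ 2 - X : F[X]) := by
        rw [dvd_iff_isRoot]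
        have : (-c) ^ q ^ 2 = -c := by
          have := FiniteField.pow_card_pow 2 (-c)
          rwa [hq] at this
        simp [IsRoot, this]
      simpa using this
    rw [hf, sq]
    exact mul_dvd_mul (key c₁) (key c₂)

theorem GL2_pow_exponent (F : Type*) [Field F] [Fintype F] (q : ℕ)
    (hq : Fintype.card F = q) (g : GL (Fin 2) F) :
    g ^ (q * (q ^ 2 - 1)) = 1 := by
  set A : Matrix (Fin 2) (Fin 2) F := (g : Matrix (Fin 2) (Fin 2) F) with hA
  have hq2 : 2 ≤ q := by rw [← hq]; exact Fintype.one_lt_card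
  -- Cayley–Hamilton and the key divisibility give (A^(q^2) - A)^2 = 0
  have hmonic := A.charpoly_monic
  have hdeg : A.charpoly.natDegree = 2 := by simp
  obtain ⟨c, hc⟩ := dvd_key F q hq A.charpoly hmonic hdeg
  have hsq : (A ^ q ^ 2 - A) ^ 2 = 0 := by
    have := congrArg (aeval A) hc
    rw [map_mul, Matrix.aeval_self_charpoly, zero_mul] at this
    simpa using this
  -- hence (A^(q^2) - A)^q = 0
  have hNq : (A ^ q ^ 2 - A) ^ q = 0 := by
    have : (A ^ q ^ 2 - A) ^ q = (A ^ q ^ 2 - A) ^ 2 * (A ^ q ^ 2 - A) ^ (q - 2) := by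
      rw [← pow_add]; congr 1; omega
    rw [this, hsq, zero_mul]
  -- Frobenius for the matrix ring in characteristic p
  obtain ⟨n, hp, hqpn⟩ := FiniteField.card F (ringChar F)
  haveI : Fact (Nat.Prime (ringChar F)) := ⟨hp⟩
  have hfrob : (A ^ q ^ 2 - A) ^ q = A ^ (q ^ 2 * q) - A ^ q := by
    have hqr : q = ringChar F ^ (n : ℕ) := hq ▸ hqpn
    calc (A ^ q ^ 2 - A) ^ q = (A ^ q ^ 2) ^ q - A ^ q := by
          rw [hqr]
          exact sub_pow_char_pow_of_commute (ringChar F) _ (Commute.pow_self A _)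
      _ = A ^ (q ^ 2 * q) - A ^ q := by rw [← pow_mul]
  have hmat : A ^ (q ^ 2 * q) = A ^ q := by
    have := hfrob.symm.trans hNq
    rwa [sub_eq_zero] at this
  -- transfer to the group of units
  have hu : g ^ (q ^ 2 * q) = g ^ q :=
    Units.ext (by simpa [Units.val_pow_eq_pow_val] using hmat)
  have hmul : g ^ q * g ^ (q * (q ^ 2 - 1)) = g ^ q * 1 := by
    rw [← pow_add, mul_one]
    rw [← hu]
    congr 1
    have h1 : q * (q ^ 2 - 1) = q ^ 2 * q - q := by
      cases q with
      | zero => simp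
      | succ m => rw [Nat.mul_sub_one]; ring_nf
    have h2 : q ≤ q ^ 2 * q := by nlinarith
    omega
  exact mul_left_cancel hmul
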